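/- arXiv:2308.11461 — 3 statements merged into one kernel-verified Lean document; each statement's English description precedes it below -/
import Mathlib

section
/- Suppose the instance is WSPT-sorted, i.e. w j * E k ≥ w k * E j whenever j ≤ k in Fin n, and let κ ∈ ℝ with κ ≤ 1. If a randomized schedule μ satisfies P_μ(j→k) ≥ κ for every pair j < k with w j * E k > w k * E j, then cost μ - cost id ≤ (1 - κ) * (cost rev - cost id). (Theorem 4.3: pairwise correct-order probability at least κ implies relative optimality gap at most 1 - κ.) -/
open Finset Nat

/-- Expected cost of schedule `σ` (σ j = position of job j):
`cost σ = ∑ j, w j * ∑_{k : σ k ≤ σ j} E k`. -/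
noncomputable def cost {n : ℕ} (w E : Fin n → ℝ) (σ : Equiv.Perm (Fin n)) : ℝ :=
  ∑ j, w j * ∑ k ∈ Finset.univ.filter (fun k => σ k ≤ σ j), E k

/-- Expected cost of a randomized schedule `μ`. -/
noncomputable def rcost {n : ℕ} (w E : Fin n → ℝ) (μ : Equiv.Perm (Fin n) → ℝ) : ℝ :=
  ∑ σ, μ σ * cost w E σ

/-- Probability that randomized schedule `μ` schedules job `j` before job `k`. -/
noncomputable def Pbefore {n : ℕ} (μ : Equiv.Perm (Fin n) → ℝ) (j k : Fin n) : ℝ :=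
  ∑ σ ∈ Finset.univ.filter (fun σ : Equiv.Perm (Fin n) => σ j < σ k), μ σ

lemma cost_decomp {n : ℕ} (w E : Fin n → ℝ) (σ : Equiv.Perm (Fin n)) :
    cost w E σ = (∑ j, w j * E j)
      + ∑ j, ∑ k, if j < k then (if σ j < σ k then w k * E j else w j * E k) else 0 := by
  unfold cost
  simp_rw [Finset.mul_sum, Finset.sum_filter]
  have step1 : ∀ j k : Fin n,
      (if σ k ≤ σ j then w j * E k else 0)
        = (if k = j then w j * E k else 0) + (if σ k < σ j then w j * E k else 0) := by
    intro j k
    rcases eq_or_ne k j with h | h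
    · subst h; simp
    · have hne : σ k ≠ σ j := fun hc => h (σ.injective hc)
      rcases lt_or_ge (σ k) (σ j) with h2 | h2
      · simp [h, h2, le_of_lt h2]
      · have h3 : ¬ σ k ≤ σ j := fun hc => hne (le_antisymm hc h2)
        have h4 : ¬ σ k < σ j := fun hc => h3 (le_of_lt hc)
        simp [h, h3, h4]
  simp_rw [step1, Finset.sum_add_distrib, Finset.sum_ite_eq' Finset.univ]
  simp only [mem_univ, if_true]
  congr 1
  have step2 : ∀ j k : Fin n, (if σ k < σ j then w j * E k else 0)
      = (if j < k ∧ σ k < σ j then w j * E k else 0)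
        + (if k < j ∧ σ k < σ j then w j * E k else 0) := by
    intro j k
    rcases lt_trichotomy j k with h | h | h
    · simp [h, not_lt_of_gt h, and_comm]
    · subst h; simp
    · simp [h, not_lt_of_gt h]
  simp_rw [step2, Finset.sum_add_distrib]
  rw [Finset.sum_comm (f := fun j k => if k < j ∧ σ k < σ j then w j * E k else 0)]
  rw [← Finset.sum_add_distrib]
  simp_rw [← Finset.sum_add_distrib]
  apply Finset.sum_congr rfl; intro j _
  apply Finset.sum_congr rfl; intro k _
  rcases lt_trichotomy j k with h | h | h
  · have hne : σ j ≠ σ k := fun hc => (_root_.ne_of_lt h) (σ.injective hc)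
    rcases lt_or_ge (σ j) (σ k) with h2 | h2
    · simp [h, h2, not_lt_of_gt h2]
    · have h3 : σ k < σ j := lt_of_le_of_ne h2 (Ne.symm hne)
      simp [h, h3, not_lt_of_gt h3]
  · subst h; simp
  · simp [h, not_lt_of_gt h]

/-- Theorem 4.3: pairwise correct-order probability at least `κ` implies relative
optimality gap at most `1 - κ`. -/
theorem stmt_5 (n : ℕ) (hn : 1 ≤ n) (w E : Fin n → ℝ)
    (hw : ∀ j, 0 < w j) (hE : ∀ j, 0 < E j)
    (hsorted : ∀ j k : Fin n, j ≤ k → w j * E k ≥ w k * E j)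
    (κ : ℝ) (hκ : κ ≤ 1)
    (μ : Equiv.Perm (Fin n) → ℝ)
    (hμ0 : ∀ σ, 0 ≤ μ σ) (hμ1 : ∑ σ, μ σ = 1)
    (hP : ∀ j k : Fin n, j < k → w j * E k > w k * E j → Pbefore μ j k ≥ κ) :
    rcost w E μ - cost w E (Equiv.refl (Fin n))
      ≤ (1 - κ) * (cost w E (Fin.revPerm : Equiv.Perm (Fin n))
          - cost w E (Equiv.refl (Fin n))) := by
  set D : ℝ := ∑ j, w j * E j with hD
  have hid : cost w E (Equiv.refl (Fin n))
      = D + ∑ j : Fin n, ∑ k : Fin n, if j < k then w k * E j else 0 := by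
    rw [cost_decomp]
    congr 1
    apply Finset.sum_congr rfl; intro j _
    apply Finset.sum_congr rfl; intro k _
    rcases lt_or_ge j k with h | h
    · simp [h]
    · simp [not_lt_of_ge h]
  have hrev : cost w E (Fin.revPerm : Equiv.Perm (Fin n))
      = D + ∑ j : Fin n, ∑ k : Fin n, if j < k then w j * E k else 0 := by
    rw [cost_decomp]
    congr 1
    apply Finset.sum_congr rfl; intro j _
    apply Finset.sum_congr rfl; intro k _
    rcases lt_or_ge j k with h | h
    · have h2 : ¬ (Fin.revPerm j < Fin.revPerm k) := by
        simp only [Fin.revPerm_apply]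
        exact not_lt_of_gt (Fin.rev_lt_rev.mpr h)
      rw [if_pos h, if_neg h2, if_pos h]
    · simp [not_lt_of_ge h]
  have hr : rcost w E μ
      = D + ∑ j : Fin n, ∑ k : Fin n, if j < k then
          (Pbefore μ j k * (w k * E j) + (1 - Pbefore μ j k) * (w j * E k)) else 0 := by
    unfold rcost
    simp_rw [cost_decomp w E, mul_add, Finset.sum_add_distrib, ← Finset.sum_mul, hμ1, one_mul]
    congr 1
    simp_rw [Finset.mul_sum]
    rw [Finset.sum_comm]
    apply Finset.sum_congr rfl; intro j _
    rw [Finset.sum_comm]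
    apply Finset.sum_congr rfl; intro k _
    rcases lt_or_ge j k with h | h
    · simp only [h, if_true]
      have key : ∀ σ : Equiv.Perm (Fin n),
          μ σ * (if σ j < σ k then w k * E j else w j * E k)
            = (if σ j < σ k then μ σ * (w k * E j) else 0)
              + (if ¬ σ j < σ k then μ σ * (w j * E k) else 0) := by
        intro σ; by_cases hσ : σ j < σ k <;> simp [hσ]
      simp_rw [key, Finset.sum_add_distrib, ← Finset.sum_filter]
      rw [← Finset.sum_mul, ← Finset.sum_mul]
      have hnot : (∑ σ ∈ Finset.univ.filter (fun σ : Equiv.Perm (Fin n) => ¬ σ j < σ k), μ σ)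
          = 1 - Pbefore μ j k := by
        have := Finset.sum_filter_add_sum_filter_not Finset.univ
          (fun σ : Equiv.Perm (Fin n) => σ j < σ k) μ
        rw [hμ1] at this
        unfold Pbefore
        linarith
      rw [hnot]; rfl
    · simp [not_lt_of_ge h]
  have main : (∑ j : Fin n, ∑ k : Fin n, if j < k then
          (Pbefore μ j k * (w k * E j) + (1 - Pbefore μ j k) * (w j * E k)) else 0)
        - (∑ j : Fin n, ∑ k : Fin n, if j < k then w k * E j else 0)
      ≤ (1 - κ) * ((∑ j : Fin n, ∑ k : Fin n, if j < k then w j * E k else 0)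
        - (∑ j : Fin n, ∑ k : Fin n, if j < k then w k * E j else 0)) := by
    simp_rw [← Finset.sum_sub_distrib, Finset.mul_sum]
    apply Finset.sum_le_sum; intro j _
    apply Finset.sum_le_sum; intro k _
    by_cases h : j < k
    · simp only [h, if_true]
      by_cases h2 : w j * E k > w k * E j
      · have hPge := hP j k h h2
        nlinarith [hPge, h2]
      · have h3 : w j * E k = w k * E j :=
          le_antisymm (not_lt.mp h2) (hsorted j k (le_of_lt h))
        rw [h3]
        have e0 : Pbefore μ j k * (w k * E j) + (1 - Pbefore μ j k) * (w k * E j) - w k * E j = 0 := by ring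
        have e1 : (1 - κ) * (w k * E j - w k * E j) = 0 := by ring
        linarith [e0, e1]
    · simp [h]
  rw [hid, hrev, hr]
  set A := ∑ j : Fin n, ∑ k : Fin n, if j < k then
      (Pbefore μ j k * (w k * E j) + (1 - Pbefore μ j k) * (w j * E k)) else 0 with hA
  set B := ∑ j : Fin n, ∑ k : Fin n, if j < k then w k * E j else 0 with hB
  set C := ∑ j : Fin n, ∑ k : Fin n, if j < k then w j * E k else 0 with hC
  have e : (1 - κ) * (D + C - (D + B)) = (1 - κ) * (C - B) := by ring
  rw [e]
  linarith [main]
end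

section
/- Suppose the instance is WSPT-sorted with cost id < cost rev, and let L := cost id and H := cost rev. For every randomized schedule μ: cost μ ≤ (n !)⁻¹ * ∑ over all σ, cost σ if and only if (cost μ - L) / (H - L) ≤ 1/2. (Second part of Lemma 3.1: beating the uniformly random schedule is equivalent to having relative optimality gap at most that of RND.) -/
open Finset Nat

lemma cost_add_rev {n : ℕ} (w E : Fin n → ℝ) (σ : Equiv.Perm (Fin n)) :
    cost w E σ + cost w E (Fin.revPerm * σ) = ∑ j, w j * (E j + ∑ k, E k) := by
  unfold cost
  rw [← Finset.sum_add_distrib]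
  refine Finset.sum_congr rfl fun j _ => ?_
  rw [← mul_add]
  congr 1
  rw [Finset.sum_filter, Finset.sum_filter, ← Finset.sum_add_distrib]
  simp only [Equiv.Perm.mul_apply, Fin.revPerm_apply]
  have : ∀ k : Fin n,
      ((if σ k ≤ σ j then E k else 0) +
        (if Fin.rev (σ k) ≤ Fin.rev (σ j) then E k else 0)) =
      (if k = j then E k else 0) + E k := by
    intro k
    have hrev : (Fin.rev (σ k) ≤ Fin.rev (σ j)) ↔ (σ j ≤ σ k) := Fin.rev_le_rev
    by_cases h1 : σ k ≤ σ j
    · by_cases h2 : σ j ≤ σ k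
      · have : k = j := σ.injective (le_antisymm h1 h2)
        simp [this, hrev, h2]
      · have : ¬ k = j := fun h => h2 (h ▸ le_refl _)
        simp [h1, hrev, h2, this]
    · have h2 : σ j ≤ σ k := le_of_not_ge h1
      have : ¬ k = j := fun h => h1 (h ▸ le_refl _)
      simp [h1, hrev, h2, this]
  rw [Finset.sum_congr rfl fun k _ => this k, Finset.sum_add_distrib,
    Finset.sum_ite_eq' Finset.univ j E]
  simp

lemma sum_cost_eq {n : ℕ} (w E : Fin n → ℝ) :
    (2 : ℝ) * ∑ σ : Equiv.Perm (Fin n), cost w E σ =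
      (n ! : ℝ) * ∑ j, w j * (E j + ∑ k, E k) := by
  have hre : ∑ σ : Equiv.Perm (Fin n), cost w E σ
      = ∑ σ : Equiv.Perm (Fin n), cost w E (Fin.revPerm * σ) :=
    (Fintype.sum_bijective (fun σ => Fin.revPerm * σ)
      (Group.mulLeft_bijective _) _ _ (fun σ => rfl)).symm
  calc (2 : ℝ) * ∑ σ : Equiv.Perm (Fin n), cost w E σ
      = ∑ σ : Equiv.Perm (Fin n), (cost w E σ + cost w E (Fin.revPerm * σ)) := by
        rw [Finset.sum_add_distrib, ← hre]; ring
    _ = ∑ _σ : Equiv.Perm (Fin n), ∑ j, w j * (E j + ∑ k, E k) := by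
        exact Finset.sum_congr rfl fun σ _ => cost_add_rev w E σ
    _ = (n ! : ℝ) * ∑ j, w j * (E j + ∑ k, E k) := by
        rw [Finset.sum_const, Finset.card_univ, Fintype.card_perm, nsmul_eq_mul, Fintype.card_fin]

/-- Second part of Lemma 3.1: beating the uniformly random schedule is equivalent
to having relative optimality gap at most `1/2`. -/
theorem stmt_7 (n : ℕ) (hn : 1 ≤ n) (w E : Fin n → ℝ)
    (hw : ∀ j, 0 < w j) (hE : ∀ j, 0 < E j)
    (hsorted : ∀ j k : Fin n, j ≤ k → w j * E k ≥ w k * E j)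
    (L H : ℝ) (hL : L = cost w E (Equiv.refl (Fin n)))
    (hH : H = cost w E (Fin.revPerm : Equiv.Perm (Fin n)))
    (hLH : L < H)
    (μ : Equiv.Perm (Fin n) → ℝ)
    (hμ0 : ∀ σ, 0 ≤ μ σ) (hμ1 : ∑ σ, μ σ = 1) :
    rcost w E μ ≤ ((n ! : ℝ))⁻¹ * ∑ σ : Equiv.Perm (Fin n), cost w E σ ↔
      (rcost w E μ - L) / (H - L) ≤ 1 / 2 := by
  have hfac : (0 : ℝ) < (n ! : ℝ) := by positivity
  have hC : L + H = ∑ j, w j * (E j + ∑ k, E k) := by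
    rw [hL, hH, ← cost_add_rev w E (Equiv.refl (Fin n))]
    simp
    rfl
  have havg : ((n ! : ℝ))⁻¹ * ∑ σ : Equiv.Perm (Fin n), cost w E σ = (L + H) / 2 := by
    have := sum_cost_eq w E
    rw [← hC] at this
    field_simp
    linarith
  rw [havg, div_le_div_iff₀ (by linarith : (0:ℝ) < H - L) (by norm_num : (0:ℝ) < 2)]
  constructor <;> intro h <;> linarith
end

section
/- Consider n jobs with weights w : Fin n → ℝ, 0 < w j, and exponential rates λ : Fin n → ℝ, 0 < λ j, so that the mean processing times are E j := 1 / λ j, and let the priorities be π j := w j * λ j. Assume the priorities are sorted nonincreasingly (π j ≥ π k whenever j ≤ k) and are α-separated for some α ≥ 1: for all j, k, either π j = π k, or π j ≥ α * π k, or π k ≥ α * π j. Let μ be a randomized schedule whose pairwise marginals match SAM on exponential inputs, i.e. P_μ(j→k) = π j / (π j + π k) for all j ≠ k. Then cost μ - cost id ≤ (cost rev - cost id) / (1 + α), where cost is computed with mean processing times E j = 1 / λ j. (Theorem 5.9: for exponentially distributed processing times with α-separated priorities, SAM has relative optimality gap at most 1/(1+α).) -/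
open Finset Nat

/-- pairwise term of the randomized cost minus the identity cost -/
noncomputable def tFun {n : ℕ} (w E : Fin n → ℝ) (μ : Equiv.Perm (Fin n) → ℝ)
    (j k : Fin n) : ℝ :=
  (w j * E k) * Pbefore μ k j - (if k < j then w j * E k else 0)

/-- pairwise term of the reversed cost minus the identity cost -/
noncomputable def sFun {n : ℕ} (w E : Fin n → ℝ) (j k : Fin n) : ℝ :=
  (if j < k then w j * E k else 0) - (if k < j then w j * E k else 0)

lemma cost_eq {n : ℕ} (w E : Fin n → ℝ) (σ : Equiv.Perm (Fin n)) :
    cost w E σ = (∑ j, w j * E j) + ∑ j, ∑ k, (if σ k < σ j then w j * E k else 0) := by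
  unfold cost
  rw [← Finset.sum_add_distrib]
  refine Finset.sum_congr rfl fun j _ => ?_
  have hset : Finset.univ.filter (fun k => σ k ≤ σ j)
      = insert j (Finset.univ.filter (fun k => σ k < σ j)) := by
    ext k
    simp only [Finset.mem_filter, Finset.mem_insert, Finset.mem_univ, true_and]
    constructor
    · intro h
      rcases lt_or_eq_of_le h with h | h
      · exact Or.inr h
      · exact Or.inl (σ.injective h)
    · rintro (rfl | h)
      · exact le_rfl
      · exact h.le
  rw [hset, Finset.sum_insert (by simp), mul_add, Finset.mul_sum, Finset.sum_filter]

lemma Pbefore_self {n : ℕ} (μ : Equiv.Perm (Fin n) → ℝ) (j : Fin n) :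
    Pbefore μ j j = 0 := by
  simp [Pbefore]

/-- Theorem 5.9: for exponentially distributed processing times with `α`-separated
priorities `π j = w j * λ j`, a randomized schedule whose pairwise marginals match
SAM has relative optimality gap at most `1 / (1 + α)`. -/
theorem stmt_16 (n : ℕ) (hn : 1 ≤ n) (w lam : Fin n → ℝ)
    (hw : ∀ j, 0 < w j) (hlam : ∀ j, 0 < lam j)
    (E : Fin n → ℝ) (hE : ∀ j, E j = 1 / lam j)
    (π : Fin n → ℝ) (hπ : ∀ j, π j = w j * lam j)
    (α : ℝ) (hα : 1 ≤ α)
    (hsorted : ∀ j k : Fin n, j ≤ k → π j ≥ π k)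
    (hsep : ∀ j k : Fin n, π j = π k ∨ π j ≥ α * π k ∨ π k ≥ α * π j)
    (μ : Equiv.Perm (Fin n) → ℝ)
    (hμ0 : ∀ σ, 0 ≤ μ σ) (hμ1 : ∑ σ, μ σ = 1)
    (hmarg : ∀ j k : Fin n, j ≠ k → Pbefore μ j k = π j / (π j + π k)) :
    rcost w E μ - cost w E (Equiv.refl (Fin n))
      ≤ (cost w E (Fin.revPerm : Equiv.Perm (Fin n))
          - cost w E (Equiv.refl (Fin n))) / (1 + α) := by
  have hπpos : ∀ j, 0 < π j := fun j => by rw [hπ]; exact mul_pos (hw j) (hlam j)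
  have h1α : (0:ℝ) < 1 + α := by linarith
  -- the randomized cost
  have hrcost : rcost w E μ = (∑ j, w j * E j)
      + ∑ j, ∑ k, (w j * E k) * Pbefore μ k j := by
    unfold rcost
    simp_rw [cost_eq w E, mul_add, Finset.sum_add_distrib, ← Finset.sum_mul, hμ1, one_mul]
    congr 1
    simp_rw [Finset.mul_sum]
    rw [Finset.sum_comm]
    refine Finset.sum_congr rfl fun j _ => ?_
    rw [Finset.sum_comm]
    refine Finset.sum_congr rfl fun k _ => ?_
    rw [Pbefore, Finset.sum_filter, Finset.mul_sum]
    refine Finset.sum_congr rfl fun σ _ => ?_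
    by_cases h : σ k < σ j <;> simp [h, mul_comm]
  -- the two deterministic costs
  have hid : cost w E (Equiv.refl (Fin n)) = (∑ j, w j * E j)
      + ∑ j, ∑ k, (if k < j then w j * E k else 0) := by
    rw [cost_eq]; simp; rfl
  have hrev : cost w E (Fin.revPerm : Equiv.Perm (Fin n)) = (∑ j, w j * E j)
      + ∑ j, ∑ k, (if j < k then w j * E k else 0) := by
    rw [cost_eq]
    congr 1
    refine Finset.sum_congr rfl fun j _ => Finset.sum_congr rfl fun k _ => ?_
    simp [Fin.rev_lt_rev]
  -- key pointwise inequality for j < k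
  have key : ∀ j k : Fin n, j < k →
      tFun w E μ j k + tFun w E μ k j ≤ (sFun w E j k + sFun w E k j) / (1 + α) := by
    intro j k hjk
    have hne : j ≠ k := ne_of_lt hjk
    have hkj : ¬ k < j := lt_asymm hjk
    have hPkj : Pbefore μ k j = π k / (π k + π j) := hmarg k j (Ne.symm hne)
    have hPjk : Pbefore μ j k = π j / (π j + π k) := hmarg j k hne
    have hS : (0:ℝ) < π j + π k := by linarith [hπpos j, hπpos k]
    have hS' : (0:ℝ) < π k + π j := by linarith [hπpos j, hπpos k]
    have hΔ : w j * E k - w k * E j = (π j - π k) / (lam j * lam k) := by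
      have hj : lam j ≠ 0 := (hlam j).ne'
      have hk : lam k ≠ 0 := (hlam k).ne'
      rw [hE, hE, hπ, hπ]
      field_simp
    have hΔ0 : 0 ≤ w j * E k - w k * E j := by
      rw [hΔ]
      exact div_nonneg (by linarith [hsorted j k hjk.le]) (mul_pos (hlam j) (hlam k)).le
    have hcase : π j = π k ∨ π j ≥ α * π k := by
      rcases hsep j k with h | h | h
      · exact Or.inl h
      · exact Or.inr h
      · left
        have h1 : π j ≤ α * π j := le_mul_of_one_le_left (hπpos j).le hα
        have h2 : π j ≥ π k := hsorted j k hjk.le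
        linarith
    have hfrac : π k / (π j + π k) * (w j * E k - w k * E j)
        ≤ (w j * E k - w k * E j) / (1 + α) := by
      rcases hcase with h | h
      · have hz : w j * E k - w k * E j = 0 := by
          rw [hΔ, h]; simp
        rw [hz]; simp
      · have hq : π k / (π j + π k) ≤ 1 / (1 + α) := by
          rw [div_le_div_iff₀ hS h1α]
          nlinarith [hπpos k]
        calc π k / (π j + π k) * (w j * E k - w k * E j)
            ≤ 1 / (1 + α) * (w j * E k - w k * E j) :=
              mul_le_mul_of_nonneg_right hq hΔ0
          _ = (w j * E k - w k * E j) / (1 + α) := by ring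
    have hLHS : tFun w E μ j k + tFun w E μ k j
        = π k / (π j + π k) * (w j * E k - w k * E j) := by
      unfold tFun
      rw [hPkj, hPjk, if_neg hkj, if_pos hjk]
      field_simp
      ring
    have hRHS : sFun w E j k + sFun w E k j = w j * E k - w k * E j := by
      unfold sFun
      rw [if_pos hjk, if_neg hkj, if_pos hjk, if_neg hkj]
      ring
    rw [hLHS, hRHS]
    exact hfrac
  -- symmetric pointwise inequality
  have pointwise : ∀ j k : Fin n,
      tFun w E μ j k + tFun w E μ k j ≤ (sFun w E j k + sFun w E k j) / (1 + α) := by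
    intro j k
    rcases lt_trichotomy j k with h | h | h
    · exact key j k h
    · subst h
      simp [tFun, sFun, Pbefore_self, lt_irrefl]
    · rw [add_comm (tFun w E μ j k), add_comm (sFun w E j k)]
      exact key k j h
  -- sum it up
  have hsum : ∑ j, ∑ k, (tFun w E μ j k + tFun w E μ k j)
      ≤ ∑ j, ∑ k, ((sFun w E j k + sFun w E k j) / (1 + α)) :=
    Finset.sum_le_sum fun j _ => Finset.sum_le_sum fun k _ => pointwise j k
  have e1 : ∑ j, ∑ k, (tFun w E μ j k + tFun w E μ k j)
      = 2 * ∑ j, ∑ k, tFun w E μ j k := by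
    simp_rw [Finset.sum_add_distrib]
    rw [show (∑ j, ∑ k, tFun w E μ k j) = ∑ j, ∑ k, tFun w E μ j k from Finset.sum_comm]
    ring
  have e2 : ∑ j, ∑ k, ((sFun w E j k + sFun w E k j) / (1 + α))
      = (2 * ∑ j, ∑ k, sFun w E j k) / (1 + α) := by
    simp_rw [← Finset.sum_div]
    rw [show (∑ j, ∑ k, (sFun w E j k + sFun w E k j))
        = 2 * ∑ j, ∑ k, sFun w E j k from ?_]
    · simp_rw [Finset.sum_add_distrib]
      rw [show (∑ j, ∑ k, sFun w E k j) = ∑ j, ∑ k, sFun w E j k from Finset.sum_comm]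
      ring
  rw [e1, e2] at hsum
  have keysum : ∑ j, ∑ k, tFun w E μ j k ≤ (∑ j, ∑ k, sFun w E j k) / (1 + α) := by
    rw [div_eq_mul_inv] at hsum ⊢
    nlinarith [hsum, inv_pos.mpr h1α]
  have eA : rcost w E μ - cost w E (Equiv.refl (Fin n)) = ∑ j, ∑ k, tFun w E μ j k := by
    have e : ∑ j, ∑ k, tFun w E μ j k
        = (∑ j, ∑ k, (w j * E k) * Pbefore μ k j)
          - ∑ j, ∑ k, (if k < j then w j * E k else 0) := by
      unfold tFun
      rw [← Finset.sum_sub_distrib]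
      exact Finset.sum_congr rfl fun j _ => Finset.sum_sub_distrib _ _
    rw [hrcost, hid, e]
    ring
  have eB : cost w E (Fin.revPerm : Equiv.Perm (Fin n)) - cost w E (Equiv.refl (Fin n))
      = ∑ j, ∑ k, sFun w E j k := by
    have e : ∑ j, ∑ k, sFun w E j k
        = (∑ j, ∑ k, (if j < k then w j * E k else 0))
          - ∑ j, ∑ k, (if k < j then w j * E k else 0) := by
      unfold sFun
      rw [← Finset.sum_sub_distrib]
      exact Finset.sum_congr rfl fun j _ => Finset.sum_sub_distrib _ _
    rw [hrev, hid, e]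
    ring
  rw [eA, eB]
  exact keysum
end
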